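/- Suppose n is an even positive integer and h > 0, and suppose n²·h·(3/4 − ρ(n)) ≤ 4(0.621·η(n) + 1.216·ω(n) + 9.0776)·h, where ρ(n) = ∑_{p|n} 1/p², η(n) = 2∑_{p|n} log p, and ω(n) is the number of distinct prime divisors of n. Then n ≤ 10. -/

import Mathlib

lemma aux_log3_lt : Real.log 3 < 1.1023 := by
  have h9 : Real.log 9 = 2 * Real.log 3 := by
    rw [show (9:ℝ) = 3^2 by norm_num, Real.log_pow]; push_cast; ring
  have h8 : Real.log 8 = 3 * Real.log 2 := by
    rw [show (8:ℝ) = 2^3 by norm_num, Real.log_pow]; push_cast; ring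
  have hdiv : Real.log 9 - Real.log 8 ≤ 9/8 - 1 := by
    have := Real.log_le_sub_one_of_pos (show (0:ℝ) < 9/8 by norm_num)
    rwa [Real.log_div (by norm_num) (by norm_num)] at this
  have h2 := Real.log_two_lt_d9
  linarith

lemma aux_log7_lt : Real.log 7 < 2.0795 := by
  have h8 : Real.log 8 = 3 * Real.log 2 := by
    rw [show (8:ℝ) = 2^3 by norm_num, Real.log_pow]; push_cast; ring
  have h78 : Real.log 7 ≤ Real.log 8 := Real.log_le_log (by norm_num) (by norm_num)
  have h2 := Real.log_two_lt_d9
  linarith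

lemma aux_tail_aux (t : ℕ) :
    ∑ j ∈ Finset.Icc 13 (12 + t), (1:ℝ)/(j:ℝ)^2 ≤ 1/12 - 1/((12:ℝ) + t) := by
  induction t with
  | zero => simp
  | succ t ih =>
    have h13 : 13 ≤ 12 + t + 1 := by omega
    rw [show 12 + (t+1) = (12 + t) + 1 from rfl, Finset.sum_Icc_succ_top h13]
    have hx : (0:ℝ) ≤ (t:ℝ) := Nat.cast_nonneg t
    have key : (1:ℝ)/((12:ℝ)+t+1)^2 ≤ 1/((12:ℝ)+t) - 1/((12:ℝ)+t+1) := by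
      rw [div_sub_div _ _ (by linarith : (12:ℝ)+t ≠ 0) (by linarith : (12:ℝ)+t+1 ≠ 0),
        div_le_div_iff₀ (by positivity) (by positivity)]
      nlinarith
    push_cast
    push_cast at ih
    rw [show (12:ℝ) + (↑t + 1) = 12 + ↑t + 1 by ring]
    linarith

lemma aux_tail (m : ℕ) : ∑ j ∈ Finset.Icc 13 m, (1:ℝ)/(j:ℝ)^2 ≤ 1/12 := by
  rcases le_or_gt m 12 with hm | hm
  · rw [Finset.Icc_eq_empty (by omega)]; norm_num
  · obtain ⟨t, rfl⟩ : ∃ t, m = 12 + t := ⟨m - 12, by omega⟩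
    have := aux_tail_aux t
    have hx : (0:ℝ) < (12:ℝ) + t := by positivity
    have : (0:ℝ) < 1/((12:ℝ)+t) := by positivity
    linarith [aux_tail_aux t]

theorem stmt_13 (n : ℕ) (hn : 0 < n) (heven : Even n) (h : ℝ) (hh : 0 < h)
    (hineq : (n : ℝ) ^ 2 * h * (3 / 4 - ∑ p ∈ n.primeFactors, (1 : ℝ) / (p : ℝ) ^ 2)
      ≤ 4 * (0.621 * (2 * ∑ p ∈ n.primeFactors, Real.log p)
        + 1.216 * (n.primeFactors.card : ℝ) + 9.0776) * h) :
    n ≤ 10 := by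
  have key : (n : ℝ) ^ 2 * (3 / 4 - ∑ p ∈ n.primeFactors, (1 : ℝ) / (p : ℝ) ^ 2)
      ≤ 4 * (0.621 * (2 * ∑ p ∈ n.primeFactors, Real.log p)
        + 1.216 * (n.primeFactors.card : ℝ) + 9.0776) := by
    refine le_of_mul_le_mul_right ?_ hh
    calc ((n : ℝ) ^ 2 * (3 / 4 - ∑ p ∈ n.primeFactors, (1 : ℝ) / (p : ℝ) ^ 2)) * h
        = (n : ℝ) ^ 2 * h * (3 / 4 - ∑ p ∈ n.primeFactors, (1 : ℝ) / (p : ℝ) ^ 2) := by ring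
      _ ≤ _ := hineq
  have h2lt := Real.log_two_lt_d9
  have h2gt := Real.log_two_gt_d9
  have h3lt := aux_log3_lt
  have h7lt := aux_log7_lt
  rcases lt_or_ge n 11 with hlt | hge
  · omega
  rcases lt_or_ge n 18 with hlt18 | hge18
  · exfalso
    interval_cases n
    · exact absurd heven (by decide)
    · have e12 : (12:ℕ).primeFactors = {2,3} := by
        rw [show (12:ℕ) = 2^2*3 by norm_num, Nat.primeFactors_mul (by norm_num) (by norm_num),
          Nat.primeFactors_prime_pow (by norm_num) Nat.prime_two,
          Nat.Prime.primeFactors (by norm_num)]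
        decide
      rw [e12] at key
      simp [Finset.sum_insert, Finset.sum_singleton] at key
      norm_num at key
      linarith
    · exact absurd heven (by decide)
    · have e14 : (14:ℕ).primeFactors = {2,7} := by
        rw [show (14:ℕ) = 2*7 by norm_num, Nat.primeFactors_mul (by norm_num) (by norm_num),
          Nat.Prime.primeFactors (by norm_num), Nat.Prime.primeFactors (by norm_num)]
        decide
      rw [e14] at key
      simp [Finset.sum_insert, Finset.sum_singleton] at key
      norm_num at key
      linarith
    · exact absurd heven (by decide)
    · have e16 : (16:ℕ).primeFactors = {2} := by
        rw [show (16:ℕ) = 2^4 by norm_num, Nat.primeFactors_prime_pow (by norm_num) Nat.prime_two]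
      rw [e16] at key
      simp [Finset.sum_singleton] at key
      norm_num at key
      linarith
    · exact absurd heven (by decide)
  · exfalso
    have hnR : (18:ℝ) ≤ (n:ℝ) := by exact_mod_cast hge18
    have hn0 : (0:ℝ) < (n:ℝ) := by linarith
    -- L ≤ log n
    have hL : ∑ p ∈ n.primeFactors, Real.log p ≤ Real.log n := by
      rw [← Real.log_prod (fun p hp => by
        exact_mod_cast (Nat.prime_of_mem_primeFactors hp).pos.ne')]
      apply Real.log_le_log
      · have : ∀ p ∈ n.primeFactors, (0:ℝ) < (p:ℝ) := fun p hp => by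
          exact_mod_cast (Nat.prime_of_mem_primeFactors hp).pos
        exact Finset.prod_pos this
      · rw [← Nat.cast_prod]
        exact_mod_cast Nat.le_of_dvd hn (Nat.prod_primeFactors_dvd n)
    -- card * log 2 ≤ L
    have hK : (n.primeFactors.card : ℝ) * Real.log 2 ≤ ∑ p ∈ n.primeFactors, Real.log p := by
      have := Finset.card_nsmul_le_sum n.primeFactors (fun p => Real.log (p:ℝ)) (Real.log 2)
        (fun p hp => Real.log_le_log (by norm_num)
          (by exact_mod_cast (Nat.prime_of_mem_primeFactors hp).two_le))
      simpa [nsmul_eq_mul] using this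
    have hK0 : (0:ℝ) ≤ (n.primeFactors.card : ℝ) := Nat.cast_nonneg _
    have hKA : 0.6931 * (n.primeFactors.card : ℝ) ≤ Real.log n := by
      have h1 : 0.6931 * (n.primeFactors.card : ℝ) ≤ Real.log 2 * (n.primeFactors.card : ℝ) :=
        mul_le_mul_of_nonneg_right (by linarith) hK0
      nlinarith
    -- S bound
    have hS : (∑ p ∈ n.primeFactors, (1 : ℝ) / (p : ℝ) ^ 2) ≤ 0.5133 := by
      have hsub : n.primeFactors ⊆ ({2,3,5,7,11} : Finset ℕ) ∪ Finset.Icc 13 n := by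
        intro p hp
        have hpp := Nat.prime_of_mem_primeFactors hp
        have hpn : p ≤ n := Nat.le_of_dvd hn (Nat.dvd_of_mem_primeFactors hp)
        have h2p := hpp.two_le
        simp only [Finset.mem_union, Finset.mem_insert, Finset.mem_singleton, Finset.mem_Icc]
        rcases le_or_gt 13 p with h13 | h13
        · exact Or.inr ⟨h13, hpn⟩
        · left; interval_cases p <;> revert hpp <;> decide
      have hdisj : Disjoint ({2,3,5,7,11} : Finset ℕ) (Finset.Icc 13 n) := by
        rw [Finset.disjoint_left]
        intro a ha hb
        simp only [Finset.mem_insert, Finset.mem_singleton] at ha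
        simp only [Finset.mem_Icc] at hb
        omega
      have hmono := Finset.sum_le_sum_of_subset_of_nonneg hsub
        (fun i _ _ => by positivity : ∀ i ∈ ({2,3,5,7,11} : Finset ℕ) ∪ Finset.Icc 13 n,
          i ∉ n.primeFactors → (0:ℝ) ≤ 1/(i:ℝ)^2)
      rw [Finset.sum_union hdisj] at hmono
      have hhead : ∑ p ∈ ({2,3,5,7,11} : Finset ℕ), (1:ℝ)/(p:ℝ)^2
          = 1/4 + 1/9 + 1/25 + 1/49 + 1/121 := by
        norm_num [Finset.sum_insert, Finset.mem_insert]
      have htail := aux_tail n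
      rw [hhead] at hmono
      linarith
    have hSn : (n:ℝ)^2 * (∑ p ∈ n.primeFactors, (1 : ℝ) / (p : ℝ) ^ 2) ≤ (n:ℝ)^2 * 0.5133 :=
      mul_le_mul_of_nonneg_left hS (sq_nonneg _)
    have hlogn : Real.log n ≤ (n:ℝ)/18 + 1.898 := by
      have hd : Real.log ((n:ℝ)/18) ≤ (n:ℝ)/18 - 1 :=
        Real.log_le_sub_one_of_pos (by positivity)
      rw [Real.log_div hn0.ne' (by norm_num)] at hd
      have h18 : Real.log 18 = Real.log 2 + 2 * Real.log 3 := by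
        rw [show (18:ℝ) = 2 * 3^2 by norm_num, Real.log_mul (by norm_num) (by norm_num),
          Real.log_pow]
        push_cast; ring
      linarith
    have hn2 : 18 * (n:ℝ) ≤ (n:ℝ)^2 := by nlinarith
    nlinarith [key, hSn, hL, hKA, hlogn, hn2]
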